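/- arXiv:math/0412058 — 2 statements merged into one kernel-verified Lean document; each statement's English description precedes it below -/
import Mathlib

section
/- Let (Ω, η, ξ) be a projective triple of rational 1-forms on ℂ² and suppose ξ admits a rational first integral in the sense that ξ = g·dR for some g, R ∈ K with g ≠ 0 and dR ≠ (0,0). Then there exist H, F ∈ K with dF ∧ dR = 0 such that η + dg/g = H·dR and g·Ω = dH + (F − H²/2)·dR. (This is the algebraic core of the theorem that a foliation admitting a projective triple whose transverse form has a meromorphic first integral is a pull-back of a Riccati foliation.) -/
open MvPolynomial

set_option synthInstance.maxHeartbeats 1000000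
set_option maxHeartbeats 2000000

noncomputable section

/-- The field of rational functions `ℂ(x,y)`. -/
abbrev RatF : Type := FractionRing (MvPolynomial (Fin 2) ℂ)

/-- Wedge product of two rational 1-forms: `ω ∧ θ = ω₁ θ₂ - ω₂ θ₁`. -/
def wedge (ω θ : RatF × RatF) : RatF := ω.1 * θ.2 - ω.2 * θ.1

/-- Exterior derivative of a rational 1-form: `dω = ∂x ω₂ - ∂y ω₁`. -/
def extd (dx dy : Derivation ℂ RatF RatF) (ω : RatF × RatF) : RatF := dx ω.2 - dy ω.1

/-- Differential of a rational function: `dF = (∂x F, ∂y F)`. -/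
def d0 (dx dy : Derivation ℂ RatF RatF) (F : RatF) : RatF × RatF := (dx F, dy F)

/-- The derivations `dx`, `dy` extend the partial derivatives on `ℂ[x,y]`. -/
def ExtendsPartials (dx dy : Derivation ℂ RatF RatF) : Prop :=
  (∀ p : MvPolynomial (Fin 2) ℂ,
      dx (algebraMap (MvPolynomial (Fin 2) ℂ) RatF p)
        = algebraMap (MvPolynomial (Fin 2) ℂ) RatF (pderiv 0 p)) ∧
  (∀ p : MvPolynomial (Fin 2) ℂ,
      dy (algebraMap (MvPolynomial (Fin 2) ℂ) RatF p)
        = algebraMap (MvPolynomial (Fin 2) ℂ) RatF (pderiv 1 p))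

/-- `(Ω, η, ξ)` is a projective triple: (Proj.1) `dΩ = η∧Ω`, (Proj.2) `dη = Ω∧ξ`,
(Proj.3) `dξ = ξ∧η`. -/
def IsProjTriple (dx dy : Derivation ℂ RatF RatF) (Ω η ξ : RatF × RatF) : Prop :=
  extd dx dy Ω = wedge η Ω ∧ extd dx dy η = wedge Ω ξ ∧ extd dx dy ξ = wedge ξ η

/-- Partial derivatives on polynomials commute. -/
lemma pderiv01_comm (p : MvPolynomial (Fin 2) ℂ) :
    pderiv 0 (pderiv 1 p) = pderiv 1 (pderiv 0 p) := by
  induction p using MvPolynomial.induction_on with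
  | C a => simp
  | add p q hp hq => simp [hp, hq]
  | mul_X p n hp =>
      simp only [pderiv_mul, map_add, pderiv_mul, hp]
      fin_cases n <;> simp

/-- A derivation on `RatF` vanishing on polynomials is zero. -/
lemma deriv_eq_zero (D : Derivation ℂ RatF RatF)
    (h : ∀ p : MvPolynomial (Fin 2) ℂ, D (algebraMap (MvPolynomial (Fin 2) ℂ) RatF p) = 0)
    (z : RatF) : D z = 0 := by
  obtain ⟨a, b, hb, rfl⟩ := IsFractionRing.div_surjective (A := MvPolynomial (Fin 2) ℂ) z
  rw [Derivation.leibniz_div, h, h]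
  simp

/-- The extended derivations commute. -/
lemma dxdy_comm (dx dy : Derivation ℂ RatF RatF) (hext : ExtendsPartials dx dy)
    (f : RatF) : dx (dy f) = dy (dx f) := by
  have h0 : ⁅dx, dy⁆ f = 0 := by
    apply deriv_eq_zero
    intro p
    rw [Derivation.commutator_apply, hext.1, hext.2, hext.2, hext.1, pderiv01_comm, sub_self]
  have h1 : ⁅dx, dy⁆ f = dx (dy f) - dy (dx f) := Derivation.commutator_apply _
  rw [h0] at h1
  linear_combination -h1

/-- A 1-form wedging to zero against a nonzero exact form is proportional to it. -/
lemma prop_of_wedge (dx dy : Derivation ℂ RatF RatF) (R : RatF) (α : RatF × RatF)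
    (hR : d0 dx dy R ≠ 0) (h : wedge α (d0 dx dy R) = 0) :
    ∃ H : RatF, α = H • d0 dx dy R := by
  simp only [wedge, d0] at h ⊢
  by_cases hx : dx R = 0
  · have hy : dy R ≠ 0 := by
      intro hy; apply hR; simp [d0, hx, hy, Prod.ext_iff]
    refine ⟨α.2 / dy R, ?_⟩
    have h1 : α.1 = α.2 / dy R * dx R := by
      rw [hx, mul_zero]
      have h' : α.1 * dy R = 0 := by rw [hx] at h; linear_combination h
      exact (mul_eq_zero.mp h').resolve_right hy
    have h2 : α.2 = α.2 / dy R * dy R := by field_simp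
    exact Prod.ext h1 h2
  · refine ⟨α.1 / dx R, ?_⟩
    have h1 : α.1 = α.1 / dx R * dx R := by field_simp
    have h2 : α.2 = α.1 / dx R * dy R := by
      field_simp
      linear_combination -h
    exact Prod.ext h1 h2

/-- If `(Ω, η, ξ)` is a projective triple and `ξ = g dR` with `g ≠ 0`, `dR ≠ 0`,
then there are `H, F ∈ K` with `dF ∧ dR = 0`, `η + dg/g = H dR` and
`g Ω = dH + (F - H²/2) dR`. -/
theorem projTriple_xi_firstIntegral (dx dy : Derivation ℂ RatF RatF)
    (hext : ExtendsPartials dx dy) (Ω η ξ : RatF × RatF)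
    (h : IsProjTriple dx dy Ω η ξ) (g R : RatF) (hg : g ≠ 0)
    (hR : d0 dx dy R ≠ 0) (hξ : ξ = g • d0 dx dy R) :
    ∃ H F : RatF, wedge (d0 dx dy F) (d0 dx dy R) = 0 ∧
      η + (dx g / g, dy g / g) = H • d0 dx dy R ∧
      g • Ω = d0 dx dy H + (F - H ^ 2 / 2) • d0 dx dy R := by
  obtain ⟨h1, h2, h3⟩ := h
  have comm := dxdy_comm dx dy hext
  -- Step A
  have e3 : dx g * dy R - dy g * dx R = g * (dx R * η.2 - dy R * η.1) := by
    rw [hξ] at h3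
    simp only [extd, wedge, d0, Prod.smul_fst, Prod.smul_snd, smul_eq_mul,
      Derivation.leibniz] at h3
    linear_combination h3 - g * comm R
  have hα : wedge (η + (dx g / g, dy g / g)) (d0 dx dy R) = 0 := by
    simp only [wedge, d0, Prod.fst_add, Prod.snd_add]
    field_simp
    linear_combination e3
  obtain ⟨H, hH⟩ := prop_of_wedge dx dy R _ hR hα
  have hη1 : η.1 = H * dx R - dx g / g := by
    have := congrArg Prod.fst hH
    simp only [Prod.fst_add, d0, Prod.smul_fst, smul_eq_mul] at this
    linear_combination this
  have hη2 : η.2 = H * dy R - dy g / g := by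
    have := congrArg Prod.snd hH
    simp only [Prod.snd_add, d0, Prod.smul_snd, smul_eq_mul] at this
    linear_combination this
  -- Step B
  have e2 : wedge (g • Ω - d0 dx dy H) (d0 dx dy R) = 0 := by
    rw [hξ] at h2
    simp only [extd, wedge, d0, Prod.smul_fst, Prod.smul_snd, smul_eq_mul] at h2
    rw [hη1, hη2] at h2
    simp only [map_sub, Derivation.leibniz, Derivation.leibniz_div, smul_eq_mul,
      smul_sub, inv_pow] at h2
    field_simp at h2
    have key : g ^ 2 * (dx H * dy R - dy H * dx R)
        = g ^ 2 * (g * (Ω.1 * dy R - Ω.2 * dx R)) := by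
      linear_combination h2 - g ^ 2 * H * comm R + g * comm g
    have key2 := mul_left_cancel₀ (pow_ne_zero 2 hg) key
    simp only [wedge, d0, Prod.fst_sub, Prod.snd_sub, Prod.smul_fst, Prod.smul_snd,
      smul_eq_mul]
    linear_combination -key2
  obtain ⟨c, hc⟩ := prop_of_wedge dx dy R _ hR e2
  have hc1 : g * Ω.1 = dx H + c * dx R := by
    have := congrArg Prod.fst hc
    simp only [Prod.fst_sub, d0, Prod.smul_fst, smul_eq_mul] at this
    linear_combination this
  have hc2 : g * Ω.2 = dy H + c * dy R := by
    have := congrArg Prod.snd hc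
    simp only [Prod.snd_sub, d0, Prod.smul_snd, smul_eq_mul] at this
    linear_combination this
  -- Step C
  have hA : dx g * Ω.2 + g * dx Ω.2 = dx (dy H) + (dx c * dy R + c * dx (dy R)) := by
    have := congrArg (fun t => dx t) hc2
    simp only [map_add, Derivation.leibniz, smul_eq_mul] at this
    linear_combination this
  have hB : dy g * Ω.1 + g * dy Ω.1 = dy (dx H) + (dy c * dx R + c * dy (dx R)) := by
    have := congrArg (fun t => dy t) hc1
    simp only [map_add, Derivation.leibniz, smul_eq_mul] at this
    linear_combination this
  have hgη1 : g * η.1 = g * H * dx R - dx g := by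
    rw [hη1]; field_simp
  have hgη2 : g * η.2 = g * H * dy R - dy g := by
    rw [hη2]; field_simp
  have e1 : extd dx dy Ω = wedge η Ω := h1
  simp only [extd, wedge] at e1
  have eqc : dx c * dy R - dy c * dx R = -(H * (dx H * dy R - dy H * dx R)) := by
    linear_combination -hA + hB - comm H - c * comm R + g * e1 + Ω.2 * hgη1 - Ω.1 * hgη2
      + H * dx R * hc2 - H * dy R * hc1
  -- conclusion
  refine ⟨H, c + H ^ 2 / 2, ?_, hH, ?_⟩
  · have h2d : ∀ D : Derivation ℂ RatF RatF, D ((2 : RatF)) = 0 := by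
      intro D
      have : (2 : RatF) = algebraMap ℂ RatF 2 := (map_ofNat (algebraMap ℂ RatF) 2).symm
      rw [this, Derivation.map_algebraMap]
    have hx2 : dx (H ^ 2 / 2) = H * dx H := by
      rw [Derivation.leibniz_div_const _ _ _ (h2d dx), Derivation.leibniz_pow]
      simp only [smul_eq_mul]
      ring
    have hy2 : dy (H ^ 2 / 2) = H * dy H := by
      rw [Derivation.leibniz_div_const _ _ _ (h2d dy), Derivation.leibniz_pow]
      simp only [smul_eq_mul]
      ring
    simp only [wedge, d0, map_add, hx2, hy2]
    linear_combination eqc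
  · have : c + H ^ 2 / 2 - H ^ 2 / 2 = c := by ring
    rw [this]
    have := hc
    apply Prod.ext
    · simp only [Prod.fst_add, Prod.smul_fst, d0, smul_eq_mul]
      linear_combination hc1
    · simp only [Prod.snd_add, Prod.smul_snd, d0, smul_eq_mul]
      linear_combination hc2
end
end

section
/- Let Ω be a rational 1-form on ℂ² with Ω ≠ (0,0) and dΩ = 0, and assume Ω has no nonconstant rational first integral, i.e. every F ∈ K with dF ∧ Ω = 0 lies in the image of ℂ in K. If (Ω, η, ξ) is a projective triple, then there exist h ∈ K and a constant c ∈ ℂ such that η = h·Ω and ξ = −dh + (c − h²/2)·Ω. -/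
open MvPolynomial

noncomputable section

set_option synthInstance.maxHeartbeats 1000000
set_option maxHeartbeats 2000000

lemma deriv_zero_of_poly (D : Derivation ℂ RatF RatF)
    (h : ∀ p : MvPolynomial (Fin 2) ℂ, D (algebraMap _ _ p) = 0) (z : RatF) : D z = 0 := by
  obtain ⟨⟨p, q⟩, rfl⟩ := IsLocalization.mk'_surjective (nonZeroDivisors (MvPolynomial (Fin 2) ℂ)) z
  have hspec := IsLocalization.mk'_spec RatF p q
  have h2 := congrArg D hspec
  rw [D.leibniz, h p, h q] at h2
  have hq : (algebraMap (MvPolynomial (Fin 2) ℂ) RatF q) ≠ 0 :=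
    IsFractionRing.to_map_ne_zero_of_mem_nonZeroDivisors q.2
  simpa [hq] using h2

lemma pderiv_pderiv_comm (i j : Fin 2) (p : MvPolynomial (Fin 2) ℂ) :
    pderiv i (pderiv j p) = pderiv j (pderiv i p) := by
  have hX : ∀ (i j n : Fin 2), pderiv i (pderiv j (X n : MvPolynomial (Fin 2) ℂ)) = 0 := by
    intro i j n
    rcases eq_or_ne n j with rfl | hn
    · rw [pderiv_X_self]; exact pderiv_one
    · rw [pderiv_X_of_ne hn]; simp
  induction p using MvPolynomial.induction_on with
  | C a => simp
  | add p q hp hq => simp [hp, hq]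
  | mul_X p n hp => simp only [pderiv_mul, map_add, hp, hX]; ring

lemma deriv_comm (dx dy : Derivation ℂ RatF RatF) (hext : ExtendsPartials dx dy) (z : RatF) :
    dx (dy z) = dy (dx z) := by
  have hz := deriv_zero_of_poly ⁅dx, dy⁆ (fun p => by
    rw [Derivation.commutator_apply, hext.2 p, hext.1 p, hext.1, hext.2, ← map_sub,
      pderiv_pderiv_comm, sub_self, map_zero]) z
  rw [Derivation.commutator_apply, sub_eq_zero] at hz
  exact hz

lemma exists_smul (Ω α : RatF × RatF) (hΩ : Ω ≠ 0)
    (hw : wedge α Ω = 0) : ∃ t : RatF, α = t • Ω := by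
  unfold wedge at hw
  by_cases h1 : Ω.1 = 0
  · have h2 : Ω.2 ≠ 0 := fun h2 => hΩ (Prod.ext h1 h2)
    refine ⟨α.2 / Ω.2, Prod.ext ?_ ?_⟩
    · simp only [Prod.smul_fst, smul_eq_mul, h1, mul_zero]
      have h3 : α.1 * Ω.2 = 0 := by linear_combination hw + α.2 * h1
      exact (mul_eq_zero.mp h3).resolve_right h2
    · simp only [Prod.smul_snd, smul_eq_mul]
      exact (div_mul_cancel₀ α.2 h2).symm
  · refine ⟨α.1 / Ω.1, Prod.ext ?_ ?_⟩
    · simp only [Prod.smul_fst, smul_eq_mul]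
      exact (div_mul_cancel₀ α.1 h1).symm
    · simp only [Prod.smul_snd, smul_eq_mul]
      rw [div_mul_eq_mul_div, eq_div_iff h1]
      linear_combination -hw

lemma d_half (D : Derivation ℂ RatF RatF) (a : RatF) : D (a ^ 2 / 2) = a * D a := by
  have h := congrArg D (show a ^ 2 / 2 + a ^ 2 / 2 = a * a by ring)
  rw [map_add, D.leibniz, smul_eq_mul] at h
  have h2 : (2 : RatF) * D (a ^ 2 / 2) = 2 * (a * D a) := by linear_combination h
  exact mul_left_cancel₀ two_ne_zero h2

/-- If `Ω ≠ 0` is closed with no nonconstant rational first integral, then any projective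
triple `(Ω, η, ξ)` has `η = h Ω` and `ξ = -dh + (c - h²/2) Ω` for some `h ∈ K`, `c ∈ ℂ`. -/
theorem projTriple_closed_noFirstIntegral (dx dy : Derivation ℂ RatF RatF)
    (hext : ExtendsPartials dx dy) (Ω η ξ : RatF × RatF) (hΩ : Ω ≠ 0)
    (hclosed : extd dx dy Ω = 0)
    (hnofi : ∀ F : RatF, wedge (d0 dx dy F) Ω = 0 → F ∈ Set.range (algebraMap ℂ RatF))
    (h : IsProjTriple dx dy Ω η ξ) :
    ∃ (h' : RatF) (c : ℂ), η = h' • Ω ∧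
      ξ = -(d0 dx dy h') + (algebraMap ℂ RatF c - h' ^ 2 / 2) • Ω := by
  obtain ⟨h1, h2, h3⟩ := h
  have h0 : dx Ω.2 - dy Ω.1 = 0 := hclosed
  -- η = h' • Ω
  obtain ⟨h', hη⟩ := exists_smul Ω η hΩ (h1.symm.trans hclosed)
  -- d(h'•Ω) = dh' ∧ Ω, so dh' ∧ Ω = Ω ∧ ξ
  have hC : dx h' * Ω.2 - dy h' * Ω.1 = Ω.1 * ξ.2 - Ω.2 * ξ.1 := by
    have := h2
    rw [hη] at this
    simp only [extd, wedge, Prod.smul_fst, Prod.smul_snd, smul_eq_mul,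
      Derivation.leibniz] at this
    linear_combination this - h' * h0
  -- (dh' + ξ) ∧ Ω = 0
  have hD : wedge (d0 dx dy h' + ξ) Ω = 0 := by
    simp only [wedge, d0, Prod.fst_add, Prod.snd_add]
    linear_combination hC
  obtain ⟨g, hg⟩ := exists_smul Ω _ hΩ hD
  have hξ : ξ = -(d0 dx dy h') + g • Ω := by
    rw [← hg]; abel
  -- final integral condition
  have hF : wedge (d0 dx dy (g + h' ^ 2 / 2)) Ω = 0 := by
    have hkey := h3
    rw [hξ, hη] at hkey
    simp only [extd, wedge, d0, Prod.fst_add, Prod.snd_add, Prod.fst_neg, Prod.snd_neg,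
      Prod.smul_fst, Prod.smul_snd, smul_eq_mul, map_add, map_neg,
      Derivation.leibniz] at hkey
    have hcomm : dx (dy h') = dy (dx h') := deriv_comm dx dy hext h'
    simp only [wedge, d0, map_add, d_half]
    linear_combination hkey - g * h0 + hcomm
  obtain ⟨c, hc⟩ := hnofi _ hF
  refine ⟨h', c, hη, ?_⟩
  have hgc : g = algebraMap ℂ RatF c - h' ^ 2 / 2 := by linear_combination -hc
  rw [hξ, hgc]
end
end
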